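/- Let C > 0, δ = 0.01, and let (xₙ) be reals with partial quadratic sums Aₙ² = Σᵢ₌₁ⁿ xᵢ² → ∞, and suppose ψ is non-decreasing with √(2 ln ln n + 3 ln ln ln n) ≤ ψ(n) ≤ √(2 ln ln n + 4 ln ln ln n) eventually, and |xₙ| ≤ C·Aₙ/ψ(Aₙ²)³ for all sufficiently large n. Then for all sufficiently large n, max₁≤i≤n |xᵢ| < (1+δ)·C·Aₙ/ψ(Aₙ²)³. -/

import Mathlib

set_option maxHeartbeats 1000000

open Real Filter

private lemma ll_tendsto : Filter.Tendsto (fun t : ℝ => Real.log (Real.log t))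
    Filter.atTop Filter.atTop :=
  Real.tendsto_log_atTop.comp Real.tendsto_log_atTop

private lemma lll_tendsto : Filter.Tendsto (fun t : ℝ => Real.log (Real.log (Real.log t)))
    Filter.atTop Filter.atTop :=
  Real.tendsto_log_atTop.comp ll_tendsto

private lemma factA : ∀ᶠ t : ℝ in atTop,
    (2 * Real.log (Real.log t) + 4 * Real.log (Real.log (Real.log t))) ^ 3 ≤ Real.sqrt t := by
  have h4 : ∀ᶠ t : ℝ in atTop, 216 * Real.log t ^ 3 ≤ t ^ ((1:ℝ)/2) := by
    have h := (isLittleO_log_rpow_rpow_atTop (3:ℝ) (by norm_num : (0:ℝ) < 1/2)).def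
      (by norm_num : (0:ℝ) < 1/216)
    filter_upwards [h, eventually_ge_atTop (1:ℝ),
      Real.tendsto_log_atTop.eventually_ge_atTop 0] with t ht ht1 hl
    have e1 : Real.log t ^ (3:ℝ) = Real.log t ^ (3:ℕ) := by
      rw [show (3:ℝ) = ((3:ℕ):ℝ) by norm_num, Real.rpow_natCast]
    rw [Real.norm_eq_abs, Real.norm_eq_abs, e1, abs_of_nonneg (pow_nonneg hl 3),
      abs_of_nonneg (Real.rpow_nonneg (by linarith) _)] at ht
    linarith
  filter_upwards [h4, ll_tendsto.eventually_ge_atTop 1, lll_tendsto.eventually_ge_atTop 0,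
    Real.tendsto_log_atTop.eventually_ge_atTop 1, eventually_ge_atTop (1:ℝ)]
    with t h216 hll hlll hl ht1
  have h0l : (0:ℝ) ≤ Real.log t := by linarith
  have h1 : Real.log (Real.log t) ≤ Real.log t := Real.log_le_self h0l
  have h2 : Real.log (Real.log (Real.log t)) ≤ Real.log (Real.log t) :=
    Real.log_le_self (by linarith)
  have hv : 2 * Real.log (Real.log t) + 4 * Real.log (Real.log (Real.log t)) ≤
      6 * Real.log t := by linarith
  have hv0 : (0:ℝ) ≤ 2 * Real.log (Real.log t) + 4 * Real.log (Real.log (Real.log t)) := by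
    linarith
  calc (2 * Real.log (Real.log t) + 4 * Real.log (Real.log (Real.log t))) ^ 3
      ≤ (6 * Real.log t) ^ 3 := pow_le_pow_left₀ hv0 hv 3
    _ = 216 * Real.log t ^ 3 := by ring
    _ ≤ t ^ ((1:ℝ)/2) := h216
    _ = Real.sqrt t := (Real.sqrt_eq_rpow t).symm

private lemma factB : ∀ᶠ t : ℝ in atTop,
    Real.log (Real.log (Real.log t)) + 6 * Real.log 2 ≤ 0.01 * Real.log (Real.log t) := by
  have key : ∀ᶠ L : ℝ in atTop, Real.log L + 6 * Real.log 2 ≤ 0.01 * L := by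
    have h := Real.isLittleO_log_id_atTop.def (by norm_num : (0:ℝ) < 0.005)
    filter_upwards [h, eventually_ge_atTop (1200:ℝ)] with L hL h12
    simp only [id_eq, Real.norm_eq_abs] at hL
    have hlog2 : Real.log 2 ≤ 1 := by
      have := Real.log_le_sub_one_of_pos (by norm_num : (0:ℝ) < 2); linarith
    have habs : |L| = L := abs_of_nonneg (by linarith)
    have h1 : Real.log L ≤ 0.005 * L := by
      calc Real.log L ≤ |Real.log L| := le_abs_self _
        _ ≤ 0.005 * |L| := hL
        _ = 0.005 * L := by rw [habs]
    linarith
  exact ll_tendsto.eventually key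

private def Good (s : ℝ) : Prop :=
  (2 * Real.log (Real.log s) + 4 * Real.log (Real.log (Real.log s))) ^ 3 ≤ Real.sqrt s ∧
  Real.log (Real.log (Real.log s)) + 6 * Real.log 2 ≤ 0.01 * Real.log (Real.log s) ∧
  1 ≤ Real.log (Real.log s) ∧ 0 ≤ Real.log (Real.log (Real.log s)) ∧ 1 ≤ s

private lemma good_eventually : ∀ᶠ s : ℝ in atTop, Good s := by
  filter_upwards [factA, factB, ll_tendsto.eventually_ge_atTop 1,
    lll_tendsto.eventually_ge_atTop 0, eventually_ge_atTop (1:ℝ)] with s a b c d e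
  exact ⟨a, b, c, d, e⟩

private lemma log_gt_one {s : ℝ} (hs : 1 ≤ s) (h : 1 ≤ Real.log (Real.log s)) :
    1 < Real.log s := by
  by_contra hcon
  push_neg at hcon
  have h0 : (0:ℝ) ≤ Real.log s := Real.log_nonneg hs
  have := Real.log_nonpos h0 hcon
  linarith

private lemma core_ineq {t T : ℝ} (ht : Good t) (hT : Good T) (htT : t ≤ T) :
    t * (2 * Real.log (Real.log T) + 4 * Real.log (Real.log (Real.log T))) ^ 3 ≤
    1.005 ^ 3 * (T * (2 * Real.log (Real.log t) + 3 * Real.log (Real.log (Real.log t))) ^ 3) := by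
  obtain ⟨hA_t, hB_t, hll_t, hlll_t, h1t⟩ := ht
  obtain ⟨hA_T, hB_T, hll_T, hlll_T, h1T⟩ := hT
  have hlt : 1 < Real.log t := log_gt_one h1t hll_t
  have hlT : 1 < Real.log T := log_gt_one h1T hll_T
  have hu1 : 1 ≤ 2 * Real.log (Real.log t) + 3 * Real.log (Real.log (Real.log t)) := by linarith
  have hv0T : (0:ℝ) ≤ 2 * Real.log (Real.log T) + 4 * Real.log (Real.log (Real.log T)) := by
    linarith
  rcases le_or_gt T (t ^ 2) with hc | hc
  · -- T ≤ t²
    have hlog_t2 : Real.log (t ^ 2) = 2 * Real.log t := by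
      rw [Real.log_pow]; push_cast; ring
    have hll_t2 : Real.log (Real.log (t ^ 2)) = Real.log 2 + Real.log (Real.log t) := by
      rw [hlog_t2, Real.log_mul two_ne_zero (by linarith)]
    have hlog2_pos : (0:ℝ) < Real.log 2 := Real.log_pos (by norm_num)
    have hlog2_le : Real.log 2 ≤ 1 := by
      have := Real.log_le_sub_one_of_pos (by norm_num : (0:ℝ) < 2); linarith
    have hlll_t2 : Real.log (Real.log (Real.log (t ^ 2))) ≤
        Real.log 2 + Real.log (Real.log (Real.log t)) := by
      rw [hll_t2]
      calc Real.log (Real.log 2 + Real.log (Real.log t))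
          ≤ Real.log (2 * Real.log (Real.log t)) :=
            Real.log_le_log (by linarith) (by linarith)
        _ = Real.log 2 + Real.log (Real.log (Real.log t)) := by
            rw [Real.log_mul two_ne_zero (by linarith)]
    have hT_le : Real.log T ≤ Real.log (t ^ 2) := Real.log_le_log (by linarith) hc
    have hllT_le : Real.log (Real.log T) ≤ Real.log (Real.log (t ^ 2)) :=
      Real.log_le_log (by linarith) hT_le
    have hlllT_le : Real.log (Real.log (Real.log T)) ≤ Real.log (Real.log (Real.log (t ^ 2))) :=
      Real.log_le_log (by linarith) hllT_le
    have hvv : 2 * Real.log (Real.log T) + 4 * Real.log (Real.log (Real.log T)) ≤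
        1.005 * (2 * Real.log (Real.log t) + 3 * Real.log (Real.log (Real.log t))) := by
      rw [hll_t2] at hllT_le
      nlinarith [hlll_t2, hlllT_le, hB_t, hlll_t]
    have h1 : t * (2 * Real.log (Real.log T) + 4 * Real.log (Real.log (Real.log T))) ^ 3 ≤
        t * (1.005 * (2 * Real.log (Real.log t) + 3 * Real.log (Real.log (Real.log t)))) ^ 3 :=
      mul_le_mul_of_nonneg_left (pow_le_pow_left₀ hv0T hvv 3) (by linarith)
    have h2 : t * (1.005 * (2 * Real.log (Real.log t) + 3 * Real.log (Real.log (Real.log t)))) ^ 3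
        ≤ T * (1.005 * (2 * Real.log (Real.log t) + 3 * Real.log (Real.log (Real.log t)))) ^ 3 :=
      mul_le_mul_of_nonneg_right htT (by positivity)
    calc t * (2 * Real.log (Real.log T) + 4 * Real.log (Real.log (Real.log T))) ^ 3
        ≤ T * (1.005 * (2 * Real.log (Real.log t) +
            3 * Real.log (Real.log (Real.log t)))) ^ 3 := le_trans h1 h2
      _ = 1.005 ^ 3 * (T * (2 * Real.log (Real.log t) +
            3 * Real.log (Real.log (Real.log t))) ^ 3) := by ring
  · -- t² < T
    have ht_sqrt : t ≤ Real.sqrt T := (Real.le_sqrt (by linarith) (by nlinarith)).2 hc.le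
    have h1 : t * (2 * Real.log (Real.log T) + 4 * Real.log (Real.log (Real.log T))) ^ 3 ≤
        t * Real.sqrt T := mul_le_mul_of_nonneg_left hA_T (by linarith)
    have h2 : t * Real.sqrt T ≤ Real.sqrt T * Real.sqrt T :=
      mul_le_mul_of_nonneg_right ht_sqrt (Real.sqrt_nonneg T)
    have h3 : Real.sqrt T * Real.sqrt T = T := Real.mul_self_sqrt (by linarith)
    have h4 : (1:ℝ) ≤ (2 * Real.log (Real.log t) + 3 * Real.log (Real.log (Real.log t))) ^ 3 := by
      have := pow_le_pow_left₀ (by norm_num : (0:ℝ) ≤ 1) hu1 3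
      simpa using this
    nlinarith [h4]

theorem running_max_bound (C : ℝ) (hC : 0 < C) (x : ℕ → ℝ) (ψ : ℝ → ℝ)
    (hmono : Monotone ψ)
    (hA : Filter.Tendsto (fun n : ℕ => ∑ i ∈ Finset.Icc 1 n, x i ^ 2)
      Filter.atTop Filter.atTop)
    (hψ : ∃ N : ℝ, ∀ t ≥ N,
      Real.sqrt (2 * Real.log (Real.log t) + 3 * Real.log (Real.log (Real.log t))) ≤ ψ t ∧
      ψ t ≤ Real.sqrt (2 * Real.log (Real.log t) + 4 * Real.log (Real.log (Real.log t))))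
    (hx : ∃ N : ℕ, ∀ n ≥ N,
      |x n| ≤ C * Real.sqrt (∑ i ∈ Finset.Icc 1 n, x i ^ 2) /
        ψ (∑ i ∈ Finset.Icc 1 n, x i ^ 2) ^ 3) :
    ∃ N : ℕ, ∀ n ≥ N, ∀ i ∈ Finset.Icc 1 n,
      |x i| < (1 + 0.01) * C * Real.sqrt (∑ j ∈ Finset.Icc 1 n, x j ^ 2) /
        ψ (∑ j ∈ Finset.Icc 1 n, x j ^ 2) ^ 3 := by
  classical
  obtain ⟨Nψ, hψ'⟩ := hψ
  obtain ⟨N₁, hx'⟩ := hx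
  have hSmono : ∀ {a b : ℕ}, a ≤ b →
      (∑ i ∈ Finset.Icc 1 a, x i ^ 2) ≤ ∑ i ∈ Finset.Icc 1 b, x i ^ 2 := by
    intro a b hab
    exact Finset.sum_le_sum_of_subset_of_nonneg (Finset.Icc_subset_Icc_right hab)
      (fun i _ _ => sq_nonneg _)
  obtain ⟨M, hM⟩ := eventually_atTop.mp (good_eventually.and (eventually_ge_atTop Nψ))
  have hψlow : ∀ s : ℝ, M ≤ s →
      Real.sqrt (2 * Real.log (Real.log s) + 3 * Real.log (Real.log (Real.log s))) ≤ ψ s :=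
    fun s hs => (hψ' s (hM s hs).2).1
  have hψhigh : ∀ s : ℝ, M ≤ s →
      ψ s ≤ Real.sqrt (2 * Real.log (Real.log s) + 4 * Real.log (Real.log (Real.log s))) :=
    fun s hs => (hψ' s (hM s hs).2).2
  have hψpos : ∀ s : ℝ, M ≤ s → 0 < ψ s := by
    intro s hs
    obtain ⟨_, _, c, d, _⟩ := (hM s hs).1
    have h2 : (0:ℝ) < 2 * Real.log (Real.log s) + 3 * Real.log (Real.log (Real.log s)) := by
      linarith
    exact lt_of_lt_of_le (Real.sqrt_pos.2 h2) (hψlow s hs)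
  obtain ⟨N₂, hN₂⟩ := eventually_atTop.mp (hA.eventually (eventually_ge_atTop M))
  set N₃ := max N₁ N₂ with hN₃def
  set M₀ : ℝ := ∑ i ∈ Finset.range N₃, |x i| with hM₀def
  have hM₀nonneg : 0 ≤ M₀ :=
    Finset.sum_nonneg fun i _ => abs_nonneg _
  have hM₀bound : ∀ i : ℕ, i < N₃ → |x i| ≤ M₀ := fun i hi =>
    Finset.single_le_sum (fun j _ => abs_nonneg (x j)) (Finset.mem_range.2 hi)
  set K : ℝ := M₀ / C + 1 with hKdef
  have hKpos : 0 < K := by positivity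
  obtain ⟨N₄, hN₄⟩ := eventually_atTop.mp (hA.eventually (eventually_ge_atTop (K ^ 4)))
  refine ⟨max N₃ N₄, fun n hn i hi => ?_⟩
  obtain ⟨hi1, hin⟩ := Finset.mem_Icc.mp hi
  set T := ∑ j ∈ Finset.Icc 1 n, x j ^ 2 with hTdef
  have hnN₂ : N₂ ≤ n := le_trans (le_trans (le_max_right N₁ N₂) (le_max_left N₃ N₄)) hn
  have hTM : M ≤ T := hN₂ n hnN₂
  have hTK : K ^ 4 ≤ T := hN₄ n (le_trans (le_max_right _ _) hn)
  have hGT : Good T := (hM T hTM).1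
  obtain ⟨hA_T, hB_T, hll_T, hlll_T, h1T⟩ := hGT
  have hψTpos : 0 < ψ T := hψpos T hTM
  have hψT3 : 0 < ψ T ^ 3 := pow_pos hψTpos 3
  have hψT2 : ψ T ≤ Real.sqrt (2 * Real.log (Real.log T) + 4 * Real.log (Real.log (Real.log T))) :=
    hψhigh T hTM
  have hvT0 : (0:ℝ) ≤ 2 * Real.log (Real.log T) + 4 * Real.log (Real.log (Real.log T)) := by
    linarith
  have hcube : ψ T ^ 3 ≤
      Real.sqrt (2 * Real.log (Real.log T) + 4 * Real.log (Real.log (Real.log T))) ^ 3 :=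
    pow_le_pow_left₀ hψTpos.le hψT2 3
  have hsq_v : (Real.sqrt (2 * Real.log (Real.log T) +
      4 * Real.log (Real.log (Real.log T))) ^ 3) ^ 2 =
      (2 * Real.log (Real.log T) + 4 * Real.log (Real.log (Real.log T))) ^ 3 := by
    rw [← pow_mul, show 3 * 2 = 2 * 3 from rfl, pow_mul, Real.sq_sqrt hvT0]
  have hψT6 : ψ T ^ 3 ≤ Real.sqrt (Real.sqrt T) := by
    refine le_trans hcube ?_
    refine le_of_pow_le_pow_left₀ (two_ne_zero) (Real.sqrt_nonneg _) ?_
    rw [hsq_v, Real.sq_sqrt (Real.sqrt_nonneg T)]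
    exact hA_T
  have hssT_pos : 0 < Real.sqrt (Real.sqrt T) :=
    Real.sqrt_pos.2 (Real.sqrt_pos.2 (by linarith))
  have hRHS : C * Real.sqrt (Real.sqrt T) ≤ C * Real.sqrt T / ψ T ^ 3 := by
    have h1 : C * Real.sqrt T / Real.sqrt (Real.sqrt T) ≤ C * Real.sqrt T / ψ T ^ 3 :=
      div_le_div_of_nonneg_left (by positivity) hψT3 hψT6
    have h2 : C * Real.sqrt T / Real.sqrt (Real.sqrt T) = C * Real.sqrt (Real.sqrt T) := by
      rw [div_eq_iff (ne_of_gt hssT_pos), mul_assoc,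
        Real.mul_self_sqrt (Real.sqrt_nonneg T)]
    linarith
  have hfinal_le : C * Real.sqrt T / ψ T ^ 3 ≤ (1 + 0.01) * C * Real.sqrt T / ψ T ^ 3 := by
    exact (div_le_div_iff_of_pos_right hψT3).2 (by nlinarith [mul_nonneg hC.le (Real.sqrt_nonneg T)])
  rcases lt_or_ge i N₃ with hiN | hiN
  · have h1 : |x i| ≤ M₀ := hM₀bound i hiN
    have h2 : M₀ < C * Real.sqrt (Real.sqrt T) := by
      have hK4 : Real.sqrt (Real.sqrt (K ^ 4)) = K := by
        rw [show K ^ 4 = (K ^ 2) ^ 2 by ring, Real.sqrt_sq (by positivity),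
          Real.sqrt_sq hKpos.le]
      have hKle : K ≤ Real.sqrt (Real.sqrt T) := by
        rw [← hK4]; exact Real.sqrt_le_sqrt (Real.sqrt_le_sqrt hTK)
      have hCK : C * K = M₀ + C := by
        rw [hKdef]; field_simp
      nlinarith
    calc |x i| ≤ M₀ := h1
      _ < C * Real.sqrt (Real.sqrt T) := h2
      _ ≤ C * Real.sqrt T / ψ T ^ 3 := hRHS
      _ ≤ (1 + 0.01) * C * Real.sqrt T / ψ T ^ 3 := hfinal_le
  · set t := ∑ j ∈ Finset.Icc 1 i, x j ^ 2 with htdef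
    have hiN₁ : N₁ ≤ i := le_trans (le_max_left _ _) hiN
    have hiN₂ : N₂ ≤ i := le_trans (le_max_right _ _) hiN
    have htM : M ≤ t := hN₂ i hiN₂
    have htT : t ≤ T := hSmono hin
    have hGt : Good t := (hM t htM).1
    have hxi : |x i| ≤ C * Real.sqrt t / ψ t ^ 3 := hx' i hiN₁
    have hψtpos : 0 < ψ t := hψpos t htM
    have hψt3 : 0 < ψ t ^ 3 := pow_pos hψtpos 3
    have core := core_ineq hGt ⟨hA_T, hB_T, hll_T, hlll_T, h1T⟩ htT
    obtain ⟨hA_t, hB_t, hll_t, hlll_t, h1t⟩ := hGt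
    have hut0 : (0:ℝ) ≤ 2 * Real.log (Real.log t) + 3 * Real.log (Real.log (Real.log t)) := by
      linarith
    have hut1 : (1:ℝ) ≤ 2 * Real.log (Real.log t) + 3 * Real.log (Real.log (Real.log t)) := by
      linarith
    -- (ψ T ^ 3)² ≤ vvT ^ 3
    have p1 : (ψ T ^ 3) ^ 2 ≤
        (2 * Real.log (Real.log T) + 4 * Real.log (Real.log (Real.log T))) ^ 3 := by
      calc (ψ T ^ 3) ^ 2 ≤ (Real.sqrt (2 * Real.log (Real.log T) +
            4 * Real.log (Real.log (Real.log T))) ^ 3) ^ 2 :=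
          pow_le_pow_left₀ (by positivity) hcube 2
        _ = (2 * Real.log (Real.log T) + 4 * Real.log (Real.log (Real.log T))) ^ 3 := hsq_v
    -- uut ^ 3 ≤ (ψ t ^ 3)²
    have p2 : (2 * Real.log (Real.log t) + 3 * Real.log (Real.log (Real.log t))) ^ 3 ≤
        (ψ t ^ 3) ^ 2 := by
      have hlow := hψlow t htM
      have hcube' : Real.sqrt (2 * Real.log (Real.log t) +
          3 * Real.log (Real.log (Real.log t))) ^ 3 ≤ ψ t ^ 3 :=
        pow_le_pow_left₀ (Real.sqrt_nonneg _) hlow 3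
      calc (2 * Real.log (Real.log t) + 3 * Real.log (Real.log (Real.log t))) ^ 3
          = (Real.sqrt (2 * Real.log (Real.log t) +
              3 * Real.log (Real.log (Real.log t))) ^ 3) ^ 2 := by
            rw [← pow_mul, show 3 * 2 = 2 * 3 from rfl, pow_mul, Real.sq_sqrt hut0]
        _ ≤ (ψ t ^ 3) ^ 2 := pow_le_pow_left₀ (by positivity) hcube' 2
    -- strict inequality on squares
    have hsq_lt : (Real.sqrt t * ψ T ^ 3) ^ 2 <
        ((1 + 0.01) * (Real.sqrt T * ψ t ^ 3)) ^ 2 := by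
      have ht0 : (0:ℝ) ≤ t := by linarith [h1t]
      have e1 : (Real.sqrt t * ψ T ^ 3) ^ 2 = t * (ψ T ^ 3) ^ 2 := by
        rw [mul_pow, Real.sq_sqrt ht0]
      have e2 : ((1 + 0.01) * (Real.sqrt T * ψ t ^ 3)) ^ 2 =
          (1 + 0.01) ^ 2 * (T * (ψ t ^ 3) ^ 2) := by
        rw [mul_pow, mul_pow, Real.sq_sqrt (by linarith : (0:ℝ) ≤ T)]
      rw [e1, e2]
      have step1 : t * (ψ T ^ 3) ^ 2 ≤
          t * (2 * Real.log (Real.log T) + 4 * Real.log (Real.log (Real.log T))) ^ 3 :=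
        mul_le_mul_of_nonneg_left p1 ht0
      have step3 : (1.005:ℝ) ^ 3 * (T * (2 * Real.log (Real.log t) +
          3 * Real.log (Real.log (Real.log t))) ^ 3) <
          (1 + 0.01) ^ 2 * (T * (2 * Real.log (Real.log t) +
          3 * Real.log (Real.log (Real.log t))) ^ 3) := by
        have hpos : (0:ℝ) < T * (2 * Real.log (Real.log t) +
            3 * Real.log (Real.log (Real.log t))) ^ 3 := by
          have h13 : (1:ℝ) ≤ (2 * Real.log (Real.log t) +
              3 * Real.log (Real.log (Real.log t))) ^ 3 := by
            have := pow_le_pow_left₀ (by norm_num : (0:ℝ) ≤ 1) hut1 3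
            simpa using this
          apply mul_pos (by linarith)
          linarith
        nlinarith [hpos]
      have step4 : (1 + 0.01:ℝ) ^ 2 * (T * (2 * Real.log (Real.log t) +
          3 * Real.log (Real.log (Real.log t))) ^ 3) ≤
          (1 + 0.01) ^ 2 * (T * (ψ t ^ 3) ^ 2) := by
        exact mul_le_mul_of_nonneg_left (mul_le_mul_of_nonneg_left p2 (by linarith))
          (by norm_num)
      calc t * (ψ T ^ 3) ^ 2
          ≤ t * (2 * Real.log (Real.log T) + 4 * Real.log (Real.log (Real.log T))) ^ 3 := step1
        _ ≤ 1.005 ^ 3 * (T * (2 * Real.log (Real.log t) +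
            3 * Real.log (Real.log (Real.log t))) ^ 3) := core
        _ < (1 + 0.01) ^ 2 * (T * (2 * Real.log (Real.log t) +
            3 * Real.log (Real.log (Real.log t))) ^ 3) := step3
        _ ≤ (1 + 0.01) ^ 2 * (T * (ψ t ^ 3) ^ 2) := step4
    have hab : Real.sqrt t * ψ T ^ 3 < (1 + 0.01) * (Real.sqrt T * ψ t ^ 3) :=
      lt_of_pow_lt_pow_left₀ 2 (by positivity) hsq_lt
    have hmain : C * Real.sqrt t / ψ t ^ 3 < (1 + 0.01) * C * Real.sqrt T / ψ T ^ 3 := by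
      rw [div_lt_div_iff₀ hψt3 hψT3]
      calc C * Real.sqrt t * ψ T ^ 3 = C * (Real.sqrt t * ψ T ^ 3) := by ring
        _ < C * ((1 + 0.01) * (Real.sqrt T * ψ t ^ 3)) := mul_lt_mul_of_pos_left hab hC
        _ = (1 + 0.01) * C * Real.sqrt T * ψ t ^ 3 := by ring
    exact lt_of_le_of_lt hxi hmain
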